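/- The map Z : ℤ³ → F is injective; that is, if Z(i,j,k) = Z(i′,j′,k′) in F then i = i′, j = j′, and k = k′. -/

import Mathlib

noncomputable section

open MvPolynomial

/-- The field `F = ℚ(x₁,…,x₆)` of rational functions in six indeterminates over `ℚ`. -/
abbrev F : Type := FractionRing (MvPolynomial (Fin 6) ℚ)

/-- The indeterminate `x_{r+1}` as an element of `F` (so `x 0 = x₁, …, x 5 = x₆`). -/
def x (r : Fin 6) : F := algebraMap (MvPolynomial (Fin 6) ℚ) F (X r)

/-- `A = (x₃x₅+x₄x₆)/(x₁x₂)` -/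
def A : F := (x 2 * x 4 + x 3 * x 5) / (x 0 * x 1)

/-- `B = (x₁x₆+x₂x₅)/(x₃x₄)` -/
def B : F := (x 0 * x 5 + x 1 * x 4) / (x 2 * x 3)

/-- `C = (x₁x₃+x₂x₄)/(x₅x₆)` -/
def C : F := (x 0 * x 2 + x 1 * x 3) / (x 4 * x 5)

/-- `D = (x₁x₃x₆+x₂x₃x₅+x₂x₄x₆)/(x₁x₄x₅)` -/
def D : F := (x 0 * x 2 * x 5 + x 1 * x 2 * x 4 + x 1 * x 3 * x 5) / (x 0 * x 3 * x 4)

/-- `E = (x₂x₄x₅+x₁x₃x₅+x₁x₄x₆)/(x₂x₃x₆)` -/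
def E : F := (x 1 * x 3 * x 4 + x 0 * x 2 * x 4 + x 0 * x 3 * x 5) / (x 1 * x 2 * x 5)

/-- `a(i,j) = i² + ij + j² + 1 + i + 2j` -/
def a (i j : ℤ) : ℤ := i^2 + i*j + j^2 + 1 + i + 2*j

/-- `b(i,j) = i² + ij + j² + 1 + 2i + j` -/
def b (i j : ℤ) : ℤ := i^2 + i*j + j^2 + 1 + 2*i + j

/-- `c(i,j) = i² + ij + j² + 1` -/
def c (i j : ℤ) : ℤ := i^2 + i*j + j^2 + 1

/-- The initial cluster variable `x_{r(i,j,k)}` determined by `2(i−j)+3k mod 6`: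
`r = 1` if `≡ 5`, `r = 2` if `≡ 2`, `r = 3` if `≡ 4`, `r = 4` if `≡ 1`,
`r = 5` if `≡ 3`, and `r = 6` if `≡ 0 (mod 6)`. -/
def xr (i j k : ℤ) : F :=
  if (2*(i-j) + 3*k) % 6 = 5 then x 0
  else if (2*(i-j) + 3*k) % 6 = 2 then x 1
  else if (2*(i-j) + 3*k) % 6 = 4 then x 2
  else if (2*(i-j) + 3*k) % 6 = 1 then x 3
  else if (2*(i-j) + 3*k) % 6 = 3 then x 4
  else x 5

/-- `Z(i,j,k) = x_{r(i,j,k)} · A^{⌊a(i,j)/3⌋} · B^{⌊b(i,j)/3⌋} · C^{⌊c(i,j)/3⌋} ·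
D^{⌊(k−1)²/4⌋} · E^{⌊k²/4⌋}`.  (Note `Int` division by a positive integer is floor
division.) -/
def Z (i j k : ℤ) : F :=
  xr i j k * A ^ (a i j / 3) * B ^ (b i j / 3) * C ^ (c i j / 3)
    * D ^ ((k-1)^2 / 4) * E ^ (k^2 / 4)

namespace Stmt11Aux

abbrev R6 : Type := MvPolynomial (Fin 6) ℚ

def PA : R6 := X 2 * X 4 + X 3 * X 5
def PB : R6 := X 0 * X 5 + X 1 * X 4
def PC : R6 := X 0 * X 2 + X 1 * X 3
def PD : R6 := X 0 * X 2 * X 5 + X 1 * X 2 * X 4 + X 1 * X 3 * X 5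
def PE : R6 := X 1 * X 3 * X 4 + X 0 * X 2 * X 4 + X 0 * X 3 * X 5
def QA : R6 := X 0 * X 1
def QB : R6 := X 2 * X 3
def QC : R6 := X 4 * X 5
def QD : R6 := X 0 * X 3 * X 4
def QE : R6 := X 1 * X 2 * X 5

/-- the chosen variable index -/
def rv (i j k : ℤ) : Fin 6 :=
  if (2*(i-j) + 3*k) % 6 = 5 then 0
  else if (2*(i-j) + 3*k) % 6 = 2 then 1
  else if (2*(i-j) + 3*k) % 6 = 4 then 2
  else if (2*(i-j) + 3*k) % 6 = 1 then 3
  else if (2*(i-j) + 3*k) % 6 = 3 then 4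
  else 5

def Num6 (i j k : ℤ) : R6 :=
  X (rv i j k) * PA ^ (a i j / 3).toNat * PB ^ (b i j / 3).toNat * PC ^ (c i j / 3).toNat
    * PD ^ ((k-1)^2 / 4).toNat * PE ^ (k^2 / 4).toNat

def Den6 (i j k : ℤ) : R6 :=
  QA ^ (a i j / 3).toNat * QB ^ (b i j / 3).toNat * QC ^ (c i j / 3).toNat
    * QD ^ ((k-1)^2 / 4).toNat * QE ^ (k^2 / 4).toNat

def ψ (r : Fin 6) : R6 →+* Polynomial ℚ :=
  (MvPolynomial.aeval (fun s : Fin 6 => if s = r then (Polynomial.X : Polynomial ℚ) else 1)).toRingHom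

def dA : Fin 6 → ℕ
  | 0 => 0 | 1 => 0 | 2 => 1 | 3 => 1 | 4 => 1 | 5 => 1
def dB : Fin 6 → ℕ
  | 0 => 1 | 1 => 1 | 2 => 0 | 3 => 0 | 4 => 1 | 5 => 1
def dC : Fin 6 → ℕ
  | 0 => 1 | 1 => 1 | 2 => 1 | 3 => 1 | 4 => 0 | 5 => 0
def dD : Fin 6 → ℕ
  | 0 => 1 | 1 => 1 | 2 => 1 | 3 => 1 | 4 => 1 | 5 => 1
def dE : Fin 6 → ℕ
  | 0 => 1 | 1 => 1 | 2 => 1 | 3 => 1 | 4 => 1 | 5 => 1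
def qA : Fin 6 → ℕ
  | 0 => 1 | 1 => 1 | 2 => 0 | 3 => 0 | 4 => 0 | 5 => 0
def qB : Fin 6 → ℕ
  | 0 => 0 | 1 => 0 | 2 => 1 | 3 => 1 | 4 => 0 | 5 => 0
def qC : Fin 6 → ℕ
  | 0 => 0 | 1 => 0 | 2 => 0 | 3 => 0 | 4 => 1 | 5 => 1
def qD : Fin 6 → ℕ
  | 0 => 1 | 1 => 0 | 2 => 0 | 3 => 1 | 4 => 1 | 5 => 0
def qE : Fin 6 → ℕ
  | 0 => 0 | 1 => 1 | 2 => 1 | 3 => 0 | 4 => 0 | 5 => 1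

lemma ne_zero_of_eval_one {p : Polynomial ℚ} (h : Polynomial.eval 1 p ≠ 0) : p ≠ 0 :=
  fun h0 => h (by simp [h0])

lemma degPA (r : Fin 6) : (ψ r PA).natDegree = dA r := by
  fin_cases r <;> simp [ψ, PA, dA] <;> first
    | rfl
    | compute_degree!
lemma degPB (r : Fin 6) : (ψ r PB).natDegree = dB r := by
  fin_cases r <;> simp [ψ, PB, dB] <;> first
    | rfl
    | compute_degree!
lemma degPC (r : Fin 6) : (ψ r PC).natDegree = dC r := by
  fin_cases r <;> simp [ψ, PC, dC] <;> first
    | rfl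
    | compute_degree!
lemma degPD (r : Fin 6) : (ψ r PD).natDegree = dD r := by
  fin_cases r <;> simp [ψ, PD, dD] <;> first
    | rfl
    | compute_degree!
lemma degPE (r : Fin 6) : (ψ r PE).natDegree = dE r := by
  fin_cases r <;> simp [ψ, PE, dE] <;> first
    | rfl
    | compute_degree!
lemma degQA (r : Fin 6) : (ψ r QA).natDegree = qA r := by
  fin_cases r <;> simp [ψ, QA, qA] <;> first
    | rfl
    | compute_degree!
lemma degQB (r : Fin 6) : (ψ r QB).natDegree = qB r := by
  fin_cases r <;> simp [ψ, QB, qB] <;> first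
    | rfl
    | compute_degree!
lemma degQC (r : Fin 6) : (ψ r QC).natDegree = qC r := by
  fin_cases r <;> simp [ψ, QC, qC] <;> first
    | rfl
    | compute_degree!
lemma degQD (r : Fin 6) : (ψ r QD).natDegree = qD r := by
  fin_cases r <;> simp [ψ, QD, qD] <;> first
    | rfl
    | compute_degree!
lemma degQE (r : Fin 6) : (ψ r QE).natDegree = qE r := by
  fin_cases r <;> simp [ψ, QE, qE] <;> first
    | rfl
    | compute_degree!

lemma nePA (r : Fin 6) : ψ r PA ≠ 0 := by
  fin_cases r <;> (apply ne_zero_of_eval_one; simp [ψ, PA]) <;> norm_num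
lemma nePB (r : Fin 6) : ψ r PB ≠ 0 := by
  fin_cases r <;> (apply ne_zero_of_eval_one; simp [ψ, PB]) <;> norm_num
lemma nePC (r : Fin 6) : ψ r PC ≠ 0 := by
  fin_cases r <;> (apply ne_zero_of_eval_one; simp [ψ, PC]) <;> norm_num
lemma nePD (r : Fin 6) : ψ r PD ≠ 0 := by
  fin_cases r <;> (apply ne_zero_of_eval_one; simp [ψ, PD]) <;> norm_num
lemma nePE (r : Fin 6) : ψ r PE ≠ 0 := by
  fin_cases r <;> (apply ne_zero_of_eval_one; simp [ψ, PE]) <;> norm_num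
lemma neQA (r : Fin 6) : ψ r QA ≠ 0 := by
  fin_cases r <;> (apply ne_zero_of_eval_one; simp [ψ, QA]) <;> norm_num
lemma neQB (r : Fin 6) : ψ r QB ≠ 0 := by
  fin_cases r <;> (apply ne_zero_of_eval_one; simp [ψ, QB]) <;> norm_num
lemma neQC (r : Fin 6) : ψ r QC ≠ 0 := by
  fin_cases r <;> (apply ne_zero_of_eval_one; simp [ψ, QC]) <;> norm_num
lemma neQD (r : Fin 6) : ψ r QD ≠ 0 := by
  fin_cases r <;> (apply ne_zero_of_eval_one; simp [ψ, QD]) <;> norm_num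
lemma neQE (r : Fin 6) : ψ r QE ≠ 0 := by
  fin_cases r <;> (apply ne_zero_of_eval_one; simp [ψ, QE]) <;> norm_num

lemma degX (r s : Fin 6) : (ψ r (X s)).natDegree = if s = r then 1 else 0 := by
  by_cases h : s = r <;> simp [ψ, h]
lemma neX (r s : Fin 6) : ψ r (X s) ≠ 0 := by
  by_cases h : s = r <;> simp [ψ, h]

lemma deg6 {p0 p1 p2 p3 p4 p5 : Polynomial ℚ} (h0 : p0 ≠ 0) (h1 : p1 ≠ 0) (h2 : p2 ≠ 0)
    (h3 : p3 ≠ 0) (h4 : p4 ≠ 0) (h5 : p5 ≠ 0) (n1 n2 n3 n4 n5 : ℕ) :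
    (p0 * p1^n1 * p2^n2 * p3^n3 * p4^n4 * p5^n5).natDegree
      = p0.natDegree + n1 * p1.natDegree + n2 * p2.natDegree + n3 * p3.natDegree
        + n4 * p4.natDegree + n5 * p5.natDegree := by
  have P1 := pow_ne_zero n1 h1
  have P2 := pow_ne_zero n2 h2
  have P3 := pow_ne_zero n3 h3
  have P4 := pow_ne_zero n4 h4
  have P5 := pow_ne_zero n5 h5
  rw [Polynomial.natDegree_mul (mul_ne_zero (mul_ne_zero (mul_ne_zero (mul_ne_zero h0 P1) P2) P3) P4) P5,
      Polynomial.natDegree_mul (mul_ne_zero (mul_ne_zero (mul_ne_zero h0 P1) P2) P3) P4,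
      Polynomial.natDegree_mul (mul_ne_zero (mul_ne_zero h0 P1) P2) P3,
      Polynomial.natDegree_mul (mul_ne_zero h0 P1) P2,
      Polynomial.natDegree_mul h0 P1,
      Polynomial.natDegree_pow, Polynomial.natDegree_pow, Polynomial.natDegree_pow,
      Polynomial.natDegree_pow, Polynomial.natDegree_pow]

lemma deg5 {p1 p2 p3 p4 p5 : Polynomial ℚ} (h1 : p1 ≠ 0) (h2 : p2 ≠ 0)
    (h3 : p3 ≠ 0) (h4 : p4 ≠ 0) (h5 : p5 ≠ 0) (n1 n2 n3 n4 n5 : ℕ) :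
    (p1^n1 * p2^n2 * p3^n3 * p4^n4 * p5^n5).natDegree
      = n1 * p1.natDegree + n2 * p2.natDegree + n3 * p3.natDegree
        + n4 * p4.natDegree + n5 * p5.natDegree := by
  have P1 := pow_ne_zero n1 h1
  have P2 := pow_ne_zero n2 h2
  have P3 := pow_ne_zero n3 h3
  have P4 := pow_ne_zero n4 h4
  have P5 := pow_ne_zero n5 h5
  rw [Polynomial.natDegree_mul (mul_ne_zero (mul_ne_zero (mul_ne_zero P1 P2) P3) P4) P5,
      Polynomial.natDegree_mul (mul_ne_zero (mul_ne_zero P1 P2) P3) P4,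
      Polynomial.natDegree_mul (mul_ne_zero P1 P2) P3,
      Polynomial.natDegree_mul P1 P2,
      Polynomial.natDegree_pow, Polynomial.natDegree_pow, Polynomial.natDegree_pow,
      Polynomial.natDegree_pow, Polynomial.natDegree_pow]

lemma degNum (i j k : ℤ) (r : Fin 6) :
    (ψ r (Num6 i j k)).natDegree
      = (if rv i j k = r then 1 else 0) + (a i j / 3).toNat * dA r + (b i j / 3).toNat * dB r
        + (c i j / 3).toNat * dC r + ((k-1)^2 / 4).toNat * dD r + (k^2 / 4).toNat * dE r := by
  rw [Num6]
  simp only [map_mul, map_pow]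
  rw [deg6 (neX r _) (nePA r) (nePB r) (nePC r) (nePD r) (nePE r),
      degX, degPA, degPB, degPC, degPD, degPE]

lemma degDen (i j k : ℤ) (r : Fin 6) :
    (ψ r (Den6 i j k)).natDegree
      = (a i j / 3).toNat * qA r + (b i j / 3).toNat * qB r + (c i j / 3).toNat * qC r
        + ((k-1)^2 / 4).toNat * qD r + (k^2 / 4).toNat * qE r := by
  rw [Den6]
  simp only [map_mul, map_pow]
  rw [deg5 (neQA r) (neQB r) (neQC r) (neQD r) (neQE r),
      degQA, degQB, degQC, degQD, degQE]

lemma neNum (i j k : ℤ) (r : Fin 6) : ψ r (Num6 i j k) ≠ 0 := by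
  rw [Num6]
  simp only [map_mul, map_pow]
  exact mul_ne_zero (mul_ne_zero (mul_ne_zero (mul_ne_zero (mul_ne_zero (neX r _)
    (pow_ne_zero _ (nePA r))) (pow_ne_zero _ (nePB r))) (pow_ne_zero _ (nePC r)))
    (pow_ne_zero _ (nePD r))) (pow_ne_zero _ (nePE r))

lemma neDen (i j k : ℤ) (r : Fin 6) : ψ r (Den6 i j k) ≠ 0 := by
  rw [Den6]
  simp only [map_mul, map_pow]
  exact mul_ne_zero (mul_ne_zero (mul_ne_zero (mul_ne_zero
    (pow_ne_zero _ (neQA r)) (pow_ne_zero _ (neQB r))) (pow_ne_zero _ (neQC r)))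
    (pow_ne_zero _ (neQD r))) (pow_ne_zero _ (neQE r))

lemma hx (r : Fin 6) : x r ≠ 0 := by
  simp only [x]
  exact fun h => X_ne_zero r (IsFractionRing.injective R6 F (by simpa using h))

lemma ha0 (i j : ℤ) : 0 ≤ a i j := by
  unfold a; nlinarith [sq_nonneg (2*i+j+1), sq_nonneg (j+1)]
lemma hb0 (i j : ℤ) : 0 ≤ b i j := by
  unfold b; nlinarith [sq_nonneg (i+2*j+1), sq_nonneg (i+1)]
lemma hc0 (i j : ℤ) : 0 ≤ c i j := by
  unfold c; nlinarith [sq_nonneg (2*i+j), sq_nonneg j]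

/-- the key representation of `Z` as a quotient of polynomials -/
lemma Zrep (i j k : ℤ) :
    Z i j k * algebraMap R6 F (Den6 i j k) = algebraMap R6 F (Num6 i j k) := by
  have hxr : xr i j k = x (rv i j k) := by
    unfold xr rv; split_ifs <;> rfl
  have hA : ∀ n : ℕ, A ^ n * algebraMap R6 F QA ^ n = algebraMap R6 F PA ^ n := by
    intro n; rw [← mul_pow]; congr 1
    rw [A, QA, PA]; simp only [map_mul, map_add]
    field_simp [show x 0 ≠ 0 from hx 0, show x 1 ≠ 0 from hx 1, x]
    simp only [x]; ring
  have hB : ∀ n : ℕ, B ^ n * algebraMap R6 F QB ^ n = algebraMap R6 F PB ^ n := by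
    intro n; rw [← mul_pow]; congr 1
    rw [B, QB, PB]; simp only [map_mul, map_add]
    field_simp [show x 2 ≠ 0 from hx 2, show x 3 ≠ 0 from hx 3, x]
    simp only [x]; ring
  have hC : ∀ n : ℕ, _root_.C ^ n * algebraMap R6 F QC ^ n = algebraMap R6 F PC ^ n := by
    intro n; rw [← mul_pow]; congr 1
    rw [_root_.C, QC, PC]; simp only [map_mul, map_add]
    field_simp [show x 4 ≠ 0 from hx 4, show x 5 ≠ 0 from hx 5, x]
    simp only [x]; ring
  have hD : ∀ n : ℕ, D ^ n * algebraMap R6 F QD ^ n = algebraMap R6 F PD ^ n := by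
    intro n; rw [← mul_pow]; congr 1
    rw [D, QD, PD]; simp only [map_mul, map_add]
    field_simp [show x 0 ≠ 0 from hx 0, show x 3 ≠ 0 from hx 3, show x 4 ≠ 0 from hx 4, x]
    simp only [x]; ring
  have hE : ∀ n : ℕ, E ^ n * algebraMap R6 F QE ^ n = algebraMap R6 F PE ^ n := by
    intro n; rw [← mul_pow]; congr 1
    rw [E, QE, PE]; simp only [map_mul, map_add]
    field_simp [show x 1 ≠ 0 from hx 1, show x 2 ≠ 0 from hx 2, show x 5 ≠ 0 from hx 5, x]
    simp only [x]; ring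
  have e1 : a i j / 3 = ((a i j / 3).toNat : ℤ) :=
    (Int.toNat_of_nonneg (Int.ediv_nonneg (ha0 i j) (by norm_num))).symm
  have e2 : b i j / 3 = ((b i j / 3).toNat : ℤ) :=
    (Int.toNat_of_nonneg (Int.ediv_nonneg (hb0 i j) (by norm_num))).symm
  have e3 : c i j / 3 = ((c i j / 3).toNat : ℤ) :=
    (Int.toNat_of_nonneg (Int.ediv_nonneg (hc0 i j) (by norm_num))).symm
  have e4 : (k-1)^2 / 4 = (((k-1)^2 / 4).toNat : ℤ) :=
    (Int.toNat_of_nonneg (Int.ediv_nonneg (sq_nonneg _) (by norm_num))).symm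
  have e5 : k^2 / 4 = ((k^2 / 4).toNat : ℤ) :=
    (Int.toNat_of_nonneg (Int.ediv_nonneg (sq_nonneg _) (by norm_num))).symm
  rw [Z, hxr, e1, e2, e3, e4, e5, zpow_natCast, zpow_natCast, zpow_natCast, zpow_natCast,
    zpow_natCast, Num6, Den6]
  simp only [map_mul, map_pow]
  simp only [← hA, ← hB, ← hC, ← hD, ← hE, x]
  ring



lemma rv_cases (i j k : ℤ) :
    ((2*(i-j) + 3*k) % 6 = 5 ∧ rv i j k = 0) ∨ ((2*(i-j) + 3*k) % 6 = 2 ∧ rv i j k = 1) ∨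
    ((2*(i-j) + 3*k) % 6 = 4 ∧ rv i j k = 2) ∨ ((2*(i-j) + 3*k) % 6 = 1 ∧ rv i j k = 3) ∨
    ((2*(i-j) + 3*k) % 6 = 3 ∧ rv i j k = 4) ∨ ((2*(i-j) + 3*k) % 6 = 0 ∧ rv i j k = 5) := by
  unfold rv; split_ifs with h1 h2 h3 h4 h5
  · exact Or.inl ⟨h1, rfl⟩
  · exact Or.inr (Or.inl ⟨h2, rfl⟩)
  · exact Or.inr (Or.inr (Or.inl ⟨h3, rfl⟩))
  · exact Or.inr (Or.inr (Or.inr (Or.inl ⟨h4, rfl⟩)))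
  · exact Or.inr (Or.inr (Or.inr (Or.inr (Or.inl ⟨h5, rfl⟩))))
  · exact Or.inr (Or.inr (Or.inr (Or.inr (Or.inr ⟨by omega, rfl⟩))))

set_option maxHeartbeats 1000000 in
lemma diag (i j k i' j' k' : ℤ)
    (hmod2 : k % 2 = k' % 2) (hmod3 : (i - j) % 3 = (i' - j') % 3)
    (E0 : ((b i j / 3).toNat + (c i j / 3).toNat + ((k-1)^2 / 4).toNat + (k^2 / 4).toNat) + ((a i' j' / 3).toNat + ((k'-1)^2 / 4).toNat) = ((b i' j' / 3).toNat + (c i' j' / 3).toNat + ((k'-1)^2 / 4).toNat + (k'^2 / 4).toNat) + ((a i j / 3).toNat + ((k-1)^2 / 4).toNat))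
    (E1 : ((b i j / 3).toNat + (c i j / 3).toNat + ((k-1)^2 / 4).toNat + (k^2 / 4).toNat) + ((a i' j' / 3).toNat + (k'^2 / 4).toNat) = ((b i' j' / 3).toNat + (c i' j' / 3).toNat + ((k'-1)^2 / 4).toNat + (k'^2 / 4).toNat) + ((a i j / 3).toNat + (k^2 / 4).toNat))
    (E2 : ((a i j / 3).toNat + (c i j / 3).toNat + ((k-1)^2 / 4).toNat + (k^2 / 4).toNat) + ((b i' j' / 3).toNat + (k'^2 / 4).toNat) = ((a i' j' / 3).toNat + (c i' j' / 3).toNat + ((k'-1)^2 / 4).toNat + (k'^2 / 4).toNat) + ((b i j / 3).toNat + (k^2 / 4).toNat))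
    (E3 : ((a i j / 3).toNat + (c i j / 3).toNat + ((k-1)^2 / 4).toNat + (k^2 / 4).toNat) + ((b i' j' / 3).toNat + ((k'-1)^2 / 4).toNat) = ((a i' j' / 3).toNat + (c i' j' / 3).toNat + ((k'-1)^2 / 4).toNat + (k'^2 / 4).toNat) + ((b i j / 3).toNat + ((k-1)^2 / 4).toNat))
    (E4 : ((a i j / 3).toNat + (b i j / 3).toNat + ((k-1)^2 / 4).toNat + (k^2 / 4).toNat) + ((c i' j' / 3).toNat + ((k'-1)^2 / 4).toNat) = ((a i' j' / 3).toNat + (b i' j' / 3).toNat + ((k'-1)^2 / 4).toNat + (k'^2 / 4).toNat) + ((c i j / 3).toNat + ((k-1)^2 / 4).toNat))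
    (E5 : ((a i j / 3).toNat + (b i j / 3).toNat + ((k-1)^2 / 4).toNat + (k^2 / 4).toNat) + ((c i' j' / 3).toNat + (k'^2 / 4).toNat) = ((a i' j' / 3).toNat + (b i' j' / 3).toNat + ((k'-1)^2 / 4).toNat + (k'^2 / 4).toNat) + ((c i j / 3).toNat + (k^2 / 4).toNat))
    : i = i' ∧ j = j' ∧ k = k' := by
  have ha2 : a i j = (i-j)^2 + (i-j) + 1 + 3*(i*j + j) := by unfold a; ring
  have hb2 : b i j = (i-j)^2 - (i-j) + 1 + 3*(i*j + i) := by unfold b; ring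
  have hc2 : c i j = (i-j)^2 + 1 + 3*(i*j) := by unfold c; ring
  have ha2' : a i' j' = (i'-j')^2 + (i'-j') + 1 + 3*(i'*j' + j') := by unfold a; ring
  have hb2' : b i' j' = (i'-j')^2 - (i'-j') + 1 + 3*(i'*j' + i') := by unfold b; ring
  have hc2' : c i' j' = (i'-j')^2 + 1 + 3*(i'*j') := by unfold c; ring
  have hA0 := ha0 i j
  have hB0 := hb0 i j
  have hC0 := hc0 i j
  have hA0' := ha0 i' j'
  have hB0' := hb0 i' j'
  have hC0' := hc0 i' j'
  have hde : ((k^2/4).toNat : ℤ) - (((k-1)^2/4).toNat : ℤ) = k/2 := by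
    have t1 : ((k^2/4).toNat : ℤ) = k^2/4 :=
      Int.toNat_of_nonneg (Int.ediv_nonneg (sq_nonneg _) (by norm_num))
    have t2 : (((k-1)^2/4).toNat : ℤ) = (k-1)^2/4 :=
      Int.toNat_of_nonneg (Int.ediv_nonneg (sq_nonneg _) (by norm_num))
    rw [t1, t2]
    rcases Int.even_or_odd k with ⟨t, ht⟩ | ⟨t, ht⟩
    · have u1 : (k-1)^2 = 4*(t*t) - 4*t + 1 := by rw [ht]; ring
      have u2 : k^2 = 4*(t*t) := by rw [ht]; ring
      rw [u1, u2, ht]; omega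
    · have u1 : (k-1)^2 = 4*(t*t) := by rw [ht]; ring
      have u2 : k^2 = 4*(t*t) + 4*t + 1 := by rw [ht]; ring
      rw [u1, u2, ht]; omega
  have hde' : ((k'^2/4).toNat : ℤ) - (((k'-1)^2/4).toNat : ℤ) = k'/2 := by
    have t1 : ((k'^2/4).toNat : ℤ) = k'^2/4 :=
      Int.toNat_of_nonneg (Int.ediv_nonneg (sq_nonneg _) (by norm_num))
    have t2 : (((k'-1)^2/4).toNat : ℤ) = (k'-1)^2/4 :=
      Int.toNat_of_nonneg (Int.ediv_nonneg (sq_nonneg _) (by norm_num))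
    rw [t1, t2]
    rcases Int.even_or_odd k' with ⟨t, ht⟩ | ⟨t, ht⟩
    · have u1 : (k'-1)^2 = 4*(t*t) - 4*t + 1 := by rw [ht]; ring
      have u2 : k'^2 = 4*(t*t) := by rw [ht]; ring
      rw [u1, u2, ht]; omega
    · have u1 : (k'-1)^2 = 4*(t*t) := by rw [ht]; ring
      have u2 : k'^2 = 4*(t*t) + 4*t + 1 := by rw [ht]; ring
      rw [u1, u2, ht]; omega
  have hk : k = k' := by omega
  subst hk
  clear hde hde' hmod2
  have hsq : (i-j)^2 % 3 = (i'-j')^2 % 3 := Int.ModEq.pow 2 hmod3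
  have hab : (a i j / 3).toNat = (a i' j' / 3).toNat ∧
      (b i j / 3).toNat = (b i' j' / 3).toNat ∧
      (c i j / 3).toNat = (c i' j' / 3).toNat := by
    clear ha2 hb2 hc2 ha2' hb2' hc2' hA0 hB0 hC0 hA0' hB0' hC0' hsq hmod3
    omega
  clear E0 E1 E2 E3 E4 E5
  have habc : a i j = a i' j' ∧ b i j = b i' j' ∧ c i j = c i' j' := by
    obtain ⟨h1, h2, h3⟩ := hab
    have d1 : a i j / 3 = a i' j' / 3 := by
      clear ha2 hb2 hc2 ha2' hb2' hc2' hsq hmod3; omega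
    have d2 : b i j / 3 = b i' j' / 3 := by
      clear ha2 hb2 hc2 ha2' hb2' hc2' hsq hmod3; omega
    have d3 : c i j / 3 = c i' j' / 3 := by
      clear ha2 hb2 hc2 ha2' hb2' hc2' hsq hmod3; omega
    clear h1 h2 h3
    have m1 : a i j % 3 = a i' j' % 3 := by clear hb2 hc2 hb2' hc2' d1 d2 d3; omega
    have m2 : b i j % 3 = b i' j' % 3 := by clear ha2 hc2 ha2' hc2' d1 d2 d3 m1; omega
    have m3 : c i j % 3 = c i' j' % 3 := by clear ha2 hb2 ha2' hb2' d1 d2 d3 m1 m2; omega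
    clear ha2 hb2 hc2 ha2' hb2' hc2' hsq hmod3
    omega
  refine ⟨?_, ?_, rfl⟩ <;> omega


set_option maxHeartbeats 2000000 in
lemma endgame (i j k i' j' k' : ℤ)
    (HE : ∀ r : Fin 6,
      ((if rv i j k = r then 1 else 0) + (a i j / 3).toNat * dA r + (b i j / 3).toNat * dB r
          + (c i j / 3).toNat * dC r + ((k-1)^2 / 4).toNat * dD r + (k^2 / 4).toNat * dE r)
        + ((a i' j' / 3).toNat * qA r + (b i' j' / 3).toNat * qB r + (c i' j' / 3).toNat * qC r
          + ((k'-1)^2 / 4).toNat * qD r + (k'^2 / 4).toNat * qE r)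
      = ((if rv i' j' k' = r then 1 else 0) + (a i' j' / 3).toNat * dA r + (b i' j' / 3).toNat * dB r
          + (c i' j' / 3).toNat * dC r + ((k'-1)^2 / 4).toNat * dD r + (k'^2 / 4).toNat * dE r)
        + ((a i j / 3).toNat * qA r + (b i j / 3).toNat * qB r + (c i j / 3).toNat * qC r
          + ((k-1)^2 / 4).toNat * qD r + (k^2 / 4).toNat * qE r)) :
    i = i' ∧ j = j' ∧ k = k' := by
  have E0 := HE 0
  have E1 := HE 1
  have E2 := HE 2
  have E3 := HE 3
  have E4 := HE 4
  have E5 := HE 5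
  clear HE
  norm_num [dA, dB, dC, dD, dE, qA, qB, qC, qD, qE] at E0 E1 E2 E3 E4 E5
  have ha2 : a i j = (i-j)^2 + (i-j) + 1 + 3*(i*j + j) := by unfold a; ring
  have hb2 : b i j = (i-j)^2 - (i-j) + 1 + 3*(i*j + i) := by unfold b; ring
  have hc2 : c i j = (i-j)^2 + 1 + 3*(i*j) := by unfold c; ring
  have ha2' : a i' j' = (i'-j')^2 + (i'-j') + 1 + 3*(i'*j' + j') := by unfold a; ring
  have hb2' : b i' j' = (i'-j')^2 - (i'-j') + 1 + 3*(i'*j' + i') := by unfold b; ring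
  have hc2' : c i' j' = (i'-j')^2 + 1 + 3*(i'*j') := by unfold c; ring
  have hA0 := ha0 i j
  have hB0 := hb0 i j
  have hC0 := hc0 i j
  have hA0' := ha0 i' j'
  have hB0' := hb0 i' j'
  have hC0' := hc0 i' j'
  have hsq3 : (i-j) % 3 = (i'-j') % 3 → (i-j)^2 % 3 = (i'-j')^2 % 3 :=
    fun hd => Int.ModEq.pow 2 hd
  have hde : ((k^2/4).toNat : ℤ) - (((k-1)^2/4).toNat : ℤ) = k/2 := by
    have t1 : ((k^2/4).toNat : ℤ) = k^2/4 :=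
      Int.toNat_of_nonneg (Int.ediv_nonneg (sq_nonneg _) (by norm_num))
    have t2 : (((k-1)^2/4).toNat : ℤ) = (k-1)^2/4 :=
      Int.toNat_of_nonneg (Int.ediv_nonneg (sq_nonneg _) (by norm_num))
    rw [t1, t2]
    rcases Int.even_or_odd k with ⟨t, ht⟩ | ⟨t, ht⟩
    · have u1 : (k-1)^2 = 4*(t*t) - 4*t + 1 := by rw [ht]; ring
      have u2 : k^2 = 4*(t*t) := by rw [ht]; ring
      rw [u1, u2, ht]; omega
    · have u1 : (k-1)^2 = 4*(t*t) := by rw [ht]; ring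
      have u2 : k^2 = 4*(t*t) + 4*t + 1 := by rw [ht]; ring
      rw [u1, u2, ht]; omega
  have hde' : ((k'^2/4).toNat : ℤ) - (((k'-1)^2/4).toNat : ℤ) = k'/2 := by
    have t1 : ((k'^2/4).toNat : ℤ) = k'^2/4 :=
      Int.toNat_of_nonneg (Int.ediv_nonneg (sq_nonneg _) (by norm_num))
    have t2 : (((k'-1)^2/4).toNat : ℤ) = (k'-1)^2/4 :=
      Int.toNat_of_nonneg (Int.ediv_nonneg (sq_nonneg _) (by norm_num))
    rw [t1, t2]
    rcases Int.even_or_odd k' with ⟨t, ht⟩ | ⟨t, ht⟩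
    · have u1 : (k'-1)^2 = 4*(t*t) - 4*t + 1 := by rw [ht]; ring
      have u2 : k'^2 = 4*(t*t) := by rw [ht]; ring
      rw [u1, u2, ht]; omega
    · have u1 : (k'-1)^2 = 4*(t*t) := by rw [ht]; ring
      have u2 : k'^2 = 4*(t*t) + 4*t + 1 := by rw [ht]; ring
      rw [u1, u2, ht]; omega
  have hkdd : k = k' →
      (((k-1)^2/4).toNat = ((k'-1)^2/4).toNat ∧ (k^2/4).toNat = (k'^2/4).toNat) := fun hk => by
    rw [hk]; exact ⟨rfl, rfl⟩
  rcases rv_cases i j k with ⟨hmc,hrv⟩|⟨hmc,hrv⟩|⟨hmc,hrv⟩|⟨hmc,hrv⟩|⟨hmc,hrv⟩|⟨hmc,hrv⟩ <;>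
    rcases rv_cases i' j' k' with
      ⟨hmc',hrv'⟩|⟨hmc',hrv'⟩|⟨hmc',hrv'⟩|⟨hmc',hrv'⟩|⟨hmc',hrv'⟩|⟨hmc',hrv'⟩ <;>
    simp only [hrv, hrv', Fin.reduceEq, reduceIte] at E0 E1 E2 E3 E4 E5 <;>
    first
      | (exfalso; omega)
      | exact diag i j k i' j' k' (by omega) (by omega) (by omega) (by omega) (by omega)
          (by omega) (by omega) (by omega)


end Stmt11Aux


set_option maxHeartbeats 4000000 in
open Stmt11Aux in
theorem stmt_11 (i j k i' j' k' : ℤ) (h : Z i j k = Z i' j' k') :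
    i = i' ∧ j = j' ∧ k = k' := by
  classical
  have hpoly : Num6 i j k * Den6 i' j' k' = Num6 i' j' k' * Den6 i j k := by
    apply IsFractionRing.injective R6 F
    simp only [map_mul]
    calc (algebraMap R6 F) (Num6 i j k) * (algebraMap R6 F) (Den6 i' j' k')
        = (Z i j k * (algebraMap R6 F) (Den6 i j k)) * (algebraMap R6 F) (Den6 i' j' k') := by
          rw [Zrep]
      _ = (Z i' j' k' * (algebraMap R6 F) (Den6 i' j' k')) * (algebraMap R6 F) (Den6 i j k) := by
          rw [h]; ring
      _ = (algebraMap R6 F) (Num6 i' j' k') * (algebraMap R6 F) (Den6 i j k) := by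
          rw [Zrep]
  have HE : ∀ r : Fin 6,
      ((if rv i j k = r then 1 else 0) + (a i j / 3).toNat * dA r + (b i j / 3).toNat * dB r
          + (c i j / 3).toNat * dC r + ((k-1)^2 / 4).toNat * dD r + (k^2 / 4).toNat * dE r)
        + ((a i' j' / 3).toNat * qA r + (b i' j' / 3).toNat * qB r + (c i' j' / 3).toNat * qC r
          + ((k'-1)^2 / 4).toNat * qD r + (k'^2 / 4).toNat * qE r)
      = ((if rv i' j' k' = r then 1 else 0) + (a i' j' / 3).toNat * dA r + (b i' j' / 3).toNat * dB r
          + (c i' j' / 3).toNat * dC r + ((k'-1)^2 / 4).toNat * dD r + (k'^2 / 4).toNat * dE r)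
        + ((a i j / 3).toNat * qA r + (b i j / 3).toNat * qB r + (c i j / 3).toNat * qC r
          + ((k-1)^2 / 4).toNat * qD r + (k^2 / 4).toNat * qE r) := by
    intro r
    have h1 := congrArg (fun p : R6 => ((ψ r) p).natDegree) hpoly
    simp only [map_mul] at h1
    rw [Polynomial.natDegree_mul (neNum i j k r) (neDen i' j' k' r),
        Polynomial.natDegree_mul (neNum i' j' k' r) (neDen i j k r),
        degNum, degNum, degDen, degDen] at h1
    exact h1
  exact endgame i j k i' j' k' HE
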